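/- Let S be a group such that the second integral group homology H₂(S; ℤ) with trivial coefficients vanishes (i.e. groupHomology of the trivial ℤ-representation in degree 2 is zero) and such that the abelianization of S is a free abelian group (i.e. a free ℤ-module). Then for every abelian group A, regarded as a trivial S-module, the second group cohomology H²(S; A) vanishes. -/

import Mathlib

/-! We define the second integral homology group `H₂(S; ℤ)` of a group `S` (with trivial
coefficients) explicitly via the inhomogeneous bar complex
`… → ℤ[S × S × S] → ℤ[S × S] → ℤ[S] → ℤ`, as the kernel of the boundary map in degree 2
modulo the image of the boundary map in degree 3. -/

/-- The degree-2 boundary map `ℤ[S × S] → ℤ[S]` of the bar complex of `S` with trivial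
`ℤ`-coefficients: `d(g, h) = [h] - [g * h] + [g]`. -/
noncomputable def barD2 (S : Type) [Group S] : ((S × S) →₀ ℤ) →+ (S →₀ ℤ) :=
  Finsupp.liftAddHom fun p => (zmultiplesHom _)
    (Finsupp.single p.2 1 - Finsupp.single (p.1 * p.2) 1 + Finsupp.single p.1 1)

/-- The degree-3 boundary map `ℤ[S × S × S] → ℤ[S × S]` of the bar complex of `S` with
trivial `ℤ`-coefficients: `d(g, h, k) = [h, k] - [g * h, k] + [g, h * k] - [g, h]`. -/
noncomputable def barD3 (S : Type) [Group S] : ((S × S × S) →₀ ℤ) →+ ((S × S) →₀ ℤ) :=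
  Finsupp.liftAddHom fun p => (zmultiplesHom _)
    (Finsupp.single (p.2.1, p.2.2) 1 - Finsupp.single (p.1 * p.2.1, p.2.2) 1
      + Finsupp.single (p.1, p.2.1 * p.2.2) 1 - Finsupp.single (p.1, p.2.1) 1)

/-- The second integral group homology `H₂(S; ℤ)` with trivial coefficients:
the kernel of the degree-2 boundary map modulo the image of the degree-3 boundary map. -/
noncomputable def H2Z (S : Type) [Group S] : Type :=
  (barD2 S).ker ⧸ ((barD3 S).range.addSubgroupOf (barD2 S).ker)

noncomputable instance (S : Type) [Group S] : AddGroup (H2Z S) := by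
  unfold H2Z; infer_instance

variable (S : Type) [Group S]

lemma barD2_single (g h : S) : barD2 S (Finsupp.single (g, h) 1) =
    Finsupp.single h 1 - Finsupp.single (g * h) 1 + Finsupp.single g 1 := by
  simp [barD2]

lemma barD3_single (g h k : S) : barD3 S (Finsupp.single (g, h, k) 1) =
    Finsupp.single (h, k) 1 - Finsupp.single (g * h, k) 1
      + Finsupp.single (g, h * k) 1 - Finsupp.single (g, h) 1 := by
  simp [barD3]

/-- range of `barD2` as a `ℤ`-submodule. -/
noncomputable def Kd2 : Submodule ℤ (S →₀ ℤ) := LinearMap.range (barD2 S).toIntLinearMap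

lemma mem_Kd2 (g h : S) :
    Finsupp.single h 1 - Finsupp.single (g * h) 1 + Finsupp.single g 1 ∈ Kd2 S :=
  ⟨Finsupp.single (g, h) 1, barD2_single S g h⟩

/-- projection to the abelianization. -/
noncomputable def piS : (S →₀ ℤ) →+ Additive (Abelianization S) :=
  Finsupp.liftAddHom fun g => (zmultiplesHom _) (Additive.ofMul (Abelianization.of g))

lemma piS_single (g : S) : piS S (Finsupp.single g 1) = Additive.ofMul (Abelianization.of g) := by
  simp [piS]

lemma Kd2_le_ker : Kd2 S ≤ LinearMap.ker (piS S).toIntLinearMap := by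
  rintro _ ⟨y, rfl⟩
  have : (piS S).comp (barD2 S) = 0 := by
    apply Finsupp.addHom_ext'
    rintro ⟨g, h⟩
    ext
    simp only [AddMonoidHom.comp_apply, Finsupp.singleAddHom_apply, AddMonoidHom.zero_apply]
    rw [barD2_single, map_add, map_sub, piS_single, piS_single, piS_single]
    have : Abelianization.of (g * h) = Abelianization.of g * Abelianization.of h := map_mul _ _ _
    rw [this]
    rw [show Additive.ofMul (Abelianization.of g * Abelianization.of h)
      = Additive.ofMul (Abelianization.of g) + Additive.ofMul (Abelianization.of h) from rfl]
    abel
  exact LinearMap.mem_ker.2 (DFunLike.congr_fun this y)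

/-- Quotient of `ℤ[S]` by the boundaries; isomorphic to the abelianization. -/
noncomputable def Qd2 : Type := (S →₀ ℤ) ⧸ Kd2 S

noncomputable instance : AddCommGroup (Qd2 S) := by unfold Qd2; infer_instance
noncomputable instance : Module ℤ (Qd2 S) := by unfold Qd2; infer_instance

/-- The canonical map `S → Multiplicative (Qd2 S)`. -/
noncomputable def phiS : S →* Multiplicative (Qd2 S) where
  toFun g := Multiplicative.ofAdd ((Kd2 S).mkQ (Finsupp.single g 1))
  map_one' := by
    have h1 : (Finsupp.single (1 : S) 1 : S →₀ ℤ) ∈ Kd2 S := by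
      have := mem_Kd2 S (1 : S) 1
      simpa using this
    have : (Kd2 S).mkQ (Finsupp.single (1 : S) 1) = 0 :=
      (Submodule.Quotient.mk_eq_zero _).2 h1
    simp [this]; rfl
  map_mul' g h := by
    have : (Kd2 S).mkQ (Finsupp.single (g * h) 1) =
        (Kd2 S).mkQ (Finsupp.single g 1) + (Kd2 S).mkQ (Finsupp.single h 1) := by
      rw [← map_add, Submodule.mkQ_apply, Submodule.mkQ_apply, Submodule.Quotient.eq]
      have := mem_Kd2 S g h
      have h2 : (Finsupp.single (g * h) 1 : S →₀ ℤ) - (Finsupp.single g 1 + Finsupp.single h 1)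
          = -((Finsupp.single h 1 : S →₀ ℤ) - Finsupp.single (g * h) 1 + Finsupp.single g 1) := by
        abel
      rw [h2]
      exact neg_mem this
    simp only [this]
    rfl

/-- Section of the projection: `Additive (Abelianization S) →+ Qd2 S`. -/
noncomputable def psiS : Additive (Abelianization S) →+ Qd2 S :=
  MonoidHom.toAdditiveLeft (Abelianization.lift (phiS S))

/-- The induced map `Qd2 S →ₗ[ℤ] Additive (Abelianization S)`. -/
noncomputable def piBar : Qd2 S →ₗ[ℤ] Additive (Abelianization S) :=
  (Kd2 S).liftQ (piS S).toIntLinearMap (Kd2_le_ker S)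

lemma psiS_comp_piBar : (psiS S).toIntLinearMap.comp (piBar S) = LinearMap.id := by
  apply LinearMap.ext
  intro q
  induction q using Submodule.Quotient.induction_on with
  | _ x =>
    show psiS S (piBar S (Submodule.Quotient.mk x)) = Submodule.Quotient.mk x
    have : ∀ y : S →₀ ℤ, psiS S (piBar S (Submodule.Quotient.mk y)) = Submodule.Quotient.mk y := by
      intro y
      have hcomp : ((psiS S).comp ((piBar S).toAddMonoidHom.comp
          (AddMonoidHom.mk' (fun z => Submodule.Quotient.mk z) (fun a b => by
            simp [Submodule.Quotient.mk_add]; rfl)))) =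
          AddMonoidHom.mk' (fun z : S →₀ ℤ => (Submodule.Quotient.mk z : Qd2 S)) (fun a b => by
            simp [Submodule.Quotient.mk_add]) := by
        apply Finsupp.addHom_ext'
        intro g
        ext
        show psiS S (piBar S (Submodule.Quotient.mk (Finsupp.single g 1)))
          = Submodule.Quotient.mk (Finsupp.single g 1)
        have h1 : piBar S (Submodule.Quotient.mk (Finsupp.single g 1))
            = piS S (Finsupp.single g 1) := rfl
        rw [h1, piS_single]
        show psiS S (Additive.ofMul (Abelianization.of g)) = _
        simp only [psiS, MonoidHom.coe_toAdditiveLeft, Function.comp_apply]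
        rw [show (Additive.ofMul (Abelianization.of g)).toMul = Abelianization.of g from rfl,
          Abelianization.lift_apply_of]
        rfl
      exact DFunLike.congr_fun hcomp y
    exact this x

lemma Qd2_projective (hfree : Module.Free ℤ (Additive (Abelianization S))) :
    Module.Projective ℤ (Qd2 S) := by
  haveI := hfree
  exact Module.Projective.of_split (piBar S) (psiS S).toIntLinearMap (psiS_comp_piBar S)

/-- Key algebraic lemma: a trivial 2-cocycle is a coboundary. -/
lemma key (h2 : Subsingleton (H2Z S))
    (hfree : Module.Free ℤ (Additive (Abelianization S)))
    {A : Type} [AddCommGroup A] (f : S × S → A)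
    (hf : ∀ g h j : S, f (h, j) - f (g * h, j) + f (g, h * j) - f (g, h) = 0) :
    ∃ x : S → A, ∀ g h : S, x h - x (g * h) + x g = f (g, h) := by
  classical
  -- the additive hom induced by `f`
  set F : ((S × S) →₀ ℤ) →+ A := Finsupp.liftAddHom fun p => (zmultiplesHom _) (f p) with hF
  have F_single : ∀ p : S × S, F (Finsupp.single p 1) = f p := by
    intro p; simp [hF]
  -- F vanishes on boundaries
  have F_d3 : ∀ y, F (barD3 S y) = 0 := by
    have hcomp : F.comp (barD3 S) = 0 := by
      apply Finsupp.addHom_ext'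
      rintro ⟨g, h, j⟩
      ext
      simp only [AddMonoidHom.comp_apply, Finsupp.singleAddHom_apply, AddMonoidHom.zero_apply]
      rw [barD3_single, map_sub, map_add, map_sub, F_single, F_single, F_single, F_single]
      exact hf g h j
    exact fun y => DFunLike.congr_fun hcomp y
  -- F vanishes on the kernel of barD2
  have F_ker : ∀ x ∈ LinearMap.ker (barD2 S).toIntLinearMap, F x = 0 := by
    intro x hx
    have hx' : x ∈ (barD2 S).ker := hx
    have h2' : Subsingleton ((barD2 S).ker ⧸ ((barD3 S).range.addSubgroupOf (barD2 S).ker)) := h2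
    have : (QuotientAddGroup.mk (⟨x, hx'⟩ : (barD2 S).ker) :
        (barD2 S).ker ⧸ ((barD3 S).range.addSubgroupOf (barD2 S).ker)) = 0 :=
      Subsingleton.elim _ _
    have hmem : (⟨x, hx'⟩ : (barD2 S).ker) ∈
        ((barD3 S).range.addSubgroupOf (barD2 S).ker) :=
      (QuotientAddGroup.eq_zero_iff _).1 this
    rw [AddSubgroup.mem_addSubgroupOf] at hmem
    obtain ⟨y, hy⟩ := hmem
    rw [show x = barD3 S y from hy.symm]
    exact F_d3 y
  -- linear versions
  set Fl : ((S × S) →₀ ℤ) →ₗ[ℤ] A := F.toIntLinearMap with hFl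
  set Dl : ((S × S) →₀ ℤ) →ₗ[ℤ] (S →₀ ℤ) := (barD2 S).toIntLinearMap with hDl
  have hker : LinearMap.ker Dl ≤ LinearMap.ker Fl := fun x hx => F_ker x hx
  -- factor F through the range of barD2
  set Fbar : Kd2 S →ₗ[ℤ] A :=
    ((LinearMap.ker Dl).liftQ Fl hker).comp
      (LinearMap.quotKerEquivRange Dl).symm.toLinearMap with hFbar
  have Fbar_apply : ∀ y : (S × S) →₀ ℤ, ∀ hmem : Dl y ∈ Kd2 S, Fbar ⟨Dl y, hmem⟩ = F y := by
    intro y hmem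
    have h1 : (LinearMap.quotKerEquivRange Dl).symm ⟨Dl y, hmem⟩
        = Submodule.Quotient.mk y := by
      apply (LinearMap.quotKerEquivRange Dl).injective
      rw [LinearEquiv.apply_symm_apply]
      exact Subtype.ext (LinearMap.quotKerEquivRange_apply_mk Dl y).symm
    show ((LinearMap.ker Dl).liftQ Fl hker)
      ((LinearMap.quotKerEquivRange Dl).symm ⟨Dl y, hmem⟩) = F y
    rw [h1]
    exact Submodule.liftQ_apply _ Fl y
  -- section of the quotient map
  haveI := Qd2_projective S hfree
  obtain ⟨sec, hsec⟩ := Module.projective_lifting_property (Kd2 S).mkQ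
    (LinearMap.id : Qd2 S →ₗ[ℤ] Qd2 S) (Submodule.mkQ_surjective _)
  -- retraction of ℤ[S] onto Kd2
  have hr : ∀ z : S →₀ ℤ, z - sec ((Kd2 S).mkQ z) ∈ Kd2 S := by
    intro z
    rw [← Submodule.Quotient.mk_eq_zero (Kd2 S)]
    have : (Kd2 S).mkQ (sec ((Kd2 S).mkQ z)) = (Kd2 S).mkQ z := by
      have := LinearMap.congr_fun hsec ((Kd2 S).mkQ z)
      exact this
    show (Kd2 S).mkQ (z - sec ((Kd2 S).mkQ z)) = 0
    rw [map_sub, this, sub_self]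
  -- the extension G of Fbar to all of ℤ[S]
  set G : (S →₀ ℤ) → A := fun z => Fbar ⟨z - sec ((Kd2 S).mkQ z), hr z⟩ with hG
  have G_d2 : ∀ y : (S × S) →₀ ℤ, G (Dl y) = F y := by
    intro y
    have hmem : Dl y ∈ Kd2 S := ⟨y, rfl⟩
    have h0 : (Kd2 S).mkQ (Dl y) = 0 := (Submodule.Quotient.mk_eq_zero _).2 hmem
    have : (⟨Dl y - sec ((Kd2 S).mkQ (Dl y)), hr (Dl y)⟩ : Kd2 S) = ⟨Dl y, hmem⟩ := by
      apply Subtype.ext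
      simp [h0]; exact map_zero sec
    rw [hG]
    simp only [this]
    exact Fbar_apply y hmem
  have G_add : ∀ z₁ z₂ : S →₀ ℤ, G (z₁ + z₂) = G z₁ + G z₂ := by
    intro z₁ z₂
    rw [hG]
    simp only
    rw [← map_add Fbar]
    congr 1
    apply Subtype.ext
    simp only [Submodule.coe_add, map_add]
    rw [show sec ((Kd2 S).mkQ z₁ + (Kd2 S).mkQ z₂) = sec ((Kd2 S).mkQ z₁) + sec ((Kd2 S).mkQ z₂) from map_add sec _ _]
    abel
  refine ⟨fun g => G (Finsupp.single g 1), fun g h => ?_⟩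
  have := G_d2 (Finsupp.single (g, h) 1)
  rw [F_single] at this
  rw [← this]
  have hD : Dl (Finsupp.single (g, h) 1) =
      Finsupp.single h 1 - Finsupp.single (g * h) 1 + Finsupp.single g 1 := barD2_single S g h
  rw [hD]
  have G_sub : ∀ z₁ z₂ : S →₀ ℤ, G (z₁ - z₂) = G z₁ - G z₂ := by
    intro z₁ z₂
    have := G_add (z₁ - z₂) z₂
    rw [sub_add_cancel] at this
    exact eq_sub_of_add_eq this.symm
  rw [G_add, G_sub]

/-- If `S` is a group whose second integral homology `H₂(S; ℤ)` (with trivial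
coefficients) vanishes and whose abelianization is a free abelian group (a free
`ℤ`-module), then for every abelian group `A`, viewed as a trivial `S`-module,
the second group cohomology `H²(S; A)` vanishes. -/
theorem stmt_1 (S : Type) [Group S]
    (h2 : Subsingleton (H2Z S))
    (hfree : Module.Free ℤ (Additive (Abelianization S)))
    (A : Type) [AddCommGroup A] :
    Subsingleton (groupCohomology (Rep.trivial ℤ S A) 2) := by
  refine ⟨fun a b => ?_⟩
  suffices hz : ∀ x : groupCohomology (Rep.trivial ℤ S A) 2, x = 0 by rw [hz a, hz b]
  intro x
  induction x using groupCohomology.H2_induction_on with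
  | h f =>
  rw [groupCohomology.H2π_eq_zero_iff]
  have hf := (groupCohomology.mem_cocycles₂_def f.1).1 f.2
  simp only [Rep.trivial_ρ_apply] at hf
  obtain ⟨x, hx⟩ := key S h2 hfree f.1 (fun g h j => hf g h j)
  refine ⟨x, funext fun p => ?_⟩
  obtain ⟨g, h⟩ := p
  simp only [groupCohomology.d₁₂_hom_apply, Rep.trivial_ρ_apply]
  exact hx g h
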